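/- arXiv:1806.11233 — 2 statements merged into one kernel-verified Lean document; each statement's English description precedes it below -/
import Mathlib

section
/- If a skew shape $\lambda/\mu$ is thin (all connected components are ribbons), then the number of decompositions of $\lambda/\mu$ into a pair (vertical strip $\lambda/\rho$, horizontal strip $\rho/\mu$) equals $2^{c}$, where $c$ is the number of connected components of $\lambda/\mu$; if $\lambda/\mu$ admits any such decomposition, then it is thin. -/
/-- The cells of the skew shape `λ/μ`. -/
def skewCells (μ lam : YoungDiagram) : Finset (ℕ × ℕ) := lam.cells \ μ.cells

/-- Two cells are (edgewise) adjacent. -/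
def Adj (c d : ℕ × ℕ) : Prop :=
  (c.1 = d.1 ∧ (c.2 = d.2 + 1 ∨ d.2 = c.2 + 1)) ∨
  (c.2 = d.2 ∧ (c.1 = d.1 + 1 ∨ d.1 = c.1 + 1))

/-- A set of cells contains no `2 × 2` square; equivalently, all of its
connected components are ribbons, i.e. the shape is thin. -/
def IsThin (s : Finset (ℕ × ℕ)) : Prop :=
  ∀ i j : ℕ, ¬((i, j) ∈ s ∧ (i + 1, j) ∈ s ∧ (i, j + 1) ∈ s ∧ (i + 1, j + 1) ∈ s)

/-- The number of edgewise-connected components of a set of cells. -/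
noncomputable def numComponents (s : Finset (ℕ × ℕ)) : ℕ :=
  Nat.card (Quot (fun a b : {c : ℕ × ℕ // c ∈ s} => Adj a.1 b.1))

/-- A set of cells is a vertical strip: at most one box per row. -/
def VStrip (s : Finset (ℕ × ℕ)) : Prop :=
  ∀ p ∈ s, ∀ q ∈ s, p.1 = q.1 → p = q

/-- A set of cells is a horizontal strip: at most one box per column. -/
def HStrip (s : Finset (ℕ × ℕ)) : Prop :=
  ∀ p ∈ s, ∀ q ∈ s, p.2 = q.2 → p = q

/-- `ρ` gives a Λ-decomposition of `λ/μ`: `λ/ρ` is a vertical strip and `ρ/μ`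
a horizontal strip. -/
def IsLambdaDecomp (μ lam ρ : YoungDiagram) : Prop :=
  μ.cells ⊆ ρ.cells ∧ ρ.cells ⊆ lam.cells ∧
    VStrip (lam.cells \ ρ.cells) ∧ HStrip (ρ.cells \ μ.cells)

namespace ThinLambda

def ct (p : ℕ × ℕ) : ℤ := (p.2 : ℤ) - (p.1 : ℤ)

variable {μ lam : YoungDiagram}

lemma mem_skew {p : ℕ × ℕ} :
    p ∈ skewCells μ lam ↔ p ∈ lam.cells ∧ p ∉ μ.cells := Finset.mem_sdiff

lemma mem_between {p q : ℕ × ℕ} {a b : ℕ} (hp : p ∈ skewCells μ lam)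
    (hq : q ∈ skewCells μ lam) (h1 : p.1 ≤ a) (h2 : p.2 ≤ b) (h3 : a ≤ q.1)
    (h4 : b ≤ q.2) : (a, b) ∈ skewCells μ lam := by
  refine mem_skew.2 ⟨?_, fun hm => (mem_skew.1 hp).2 ?_⟩
  · exact (YoungDiagram.mem_cells _).2
      (lam.up_left_mem h3 h4 ((YoungDiagram.mem_cells _).1 (mem_skew.1 hq).1))
  · exact (YoungDiagram.mem_cells _).2
      (μ.up_left_mem h1 h2 ((YoungDiagram.mem_cells _).1 hm))

lemma ct_inj (hthin : IsThin (skewCells μ lam)) {p q : ℕ × ℕ}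
    (hp : p ∈ skewCells μ lam) (hq : q ∈ skewCells μ lam) (hc : ct p = ct q) :
    p = q := by
  unfold ct at hc
  have H : ∀ p q : ℕ × ℕ, p ∈ skewCells μ lam → q ∈ skewCells μ lam →
      (p.2 : ℤ) - p.1 = (q.2 : ℤ) - q.1 → p.1 < q.1 → False := by
    intro p q hp hq hc hlt
    obtain ⟨d, hd1, hd2⟩ : ∃ d, q.1 = p.1 + d + 1 ∧ q.2 = p.2 + d + 1 :=
      ⟨q.1 - p.1 - 1, by omega⟩
    exact hthin (p.1 + d) (p.2 + d)
      ⟨mem_between hp hq (by omega) (by omega) (by omega) (by omega),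
       mem_between hp hq (by omega) (by omega) (by omega) (by omega),
       mem_between hp hq (by omega) (by omega) (by omega) (by omega),
       mem_between hp hq (by omega) (by omega) (by omega) (by omega)⟩
  rcases lt_trichotomy p.1 q.1 with h | h | h
  · exact (H p q hp hq hc h).elim
  · exact Prod.ext h (by omega)
  · exact (H q p hq hp hc.symm h).elim

lemma consec (hthin : IsThin (skewCells μ lam)) {p q : ℕ × ℕ}
    (hp : p ∈ skewCells μ lam) (hq : q ∈ skewCells μ lam)
    (hc : ct q = ct p + 1) :
    (q.1 = p.1 ∧ q.2 = p.2 + 1) ∨ (p.1 = q.1 + 1 ∧ q.2 = p.2) := by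
  unfold ct at hc
  by_cases h1 : q.1 = p.1
  · exact Or.inl ⟨h1, by omega⟩
  by_cases h2 : p.1 = q.1 + 1
  · exact Or.inr ⟨h2, by omega⟩
  exfalso
  have h3 : p.1 < q.1 ∨ q.1 + 2 ≤ p.1 := by omega
  rcases h3 with h | h
  · obtain ⟨a, ha⟩ : ∃ a, q.1 = a + 1 := ⟨q.1 - 1, by omega⟩
    obtain ⟨b, hb⟩ : ∃ b, q.2 = b + 1 := ⟨q.2 - 1, by omega⟩
    have hr : (a, b) ∈ skewCells μ lam :=
      mem_between hp hq (by omega) (by omega) (by omega) (by omega)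
    have heq := ct_inj hthin hr hq (by unfold ct; push_cast; omega)
    have : a = q.1 := congrArg Prod.fst heq
    omega
  · have hr : (q.1 + 1, q.2) ∈ skewCells μ lam :=
      mem_between hq hp (by omega) (le_refl _) (by omega) (by omega)
    have heq := ct_inj hthin hr hp (by unfold ct; push_cast; omega)
    have : q.1 + 1 = p.1 := congrArg Prod.fst heq
    omega

def maxes (μ lam : YoungDiagram) : Finset (ℕ × ℕ) :=
  (skewCells μ lam).filter fun p => ∀ q ∈ skewCells μ lam, ct q ≠ ct p + 1

def hforced (μ lam : YoungDiagram) : Finset (ℕ × ℕ) :=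
  (skewCells μ lam).filter fun p => (p.1, p.2 + 1) ∈ skewCells μ lam

def rhoCells (μ lam : YoungDiagram) (A : Finset (ℕ × ℕ)) : Finset (ℕ × ℕ) :=
  (μ.cells ∪ hforced μ lam) ∪ A

lemma maxes_subset : maxes μ lam ⊆ skewCells μ lam := Finset.filter_subset _ _
lemma hforced_subset : hforced μ lam ⊆ skewCells μ lam := Finset.filter_subset _ _

lemma isLowerSet_of_steps {s : Finset (ℕ × ℕ)}
    (h1 : ∀ i j, (i + 1, j) ∈ s → (i, j) ∈ s)
    (h2 : ∀ i j, (i, j + 1) ∈ s → (i, j) ∈ s) :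
    IsLowerSet (↑s : Set (ℕ × ℕ)) := by
  have hrow : ∀ k i j, (i + k, j) ∈ s → (i, j) ∈ s := by
    intro k
    induction k with
    | zero => intro i j h; simpa using h
    | succ n ih => intro i j h; exact ih i j (h1 (i + n) j h)
  have hcol : ∀ k i j, (i, j + k) ∈ s → (i, j) ∈ s := by
    intro k
    induction k with
    | zero => intro i j h; simpa using h
    | succ n ih => intro i j h; exact ih i j (h2 i (j + n) h)
  intro a b hba ha
  obtain ⟨hb1, hb2⟩ := Prod.le_def.1 hba
  obtain ⟨k, hk⟩ : ∃ k, a.1 = b.1 + k := ⟨a.1 - b.1, by omega⟩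
  obtain ⟨l, hl⟩ : ∃ l, a.2 = b.2 + l := ⟨a.2 - b.2, by omega⟩
  have ha' : (b.1 + k, b.2 + l) ∈ s := by rw [← hk, ← hl]; simpa using ha
  exact hcol l b.1 b.2 (hrow k b.1 (b.2 + l) ha')

lemma rhoCells_subset_lam (hsub : μ.cells ⊆ lam.cells) {A : Finset (ℕ × ℕ)}
    (hA : A ⊆ maxes μ lam) : rhoCells μ lam A ⊆ lam.cells := by
  intro p hp
  rcases Finset.mem_union.1 hp with hp | hp
  · rcases Finset.mem_union.1 hp with hp | hp
    · exact hsub hp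
    · exact (mem_skew.1 (hforced_subset hp)).1
  · exact (mem_skew.1 (maxes_subset (hA hp))).1

lemma mem_rhoCells_sdiff {A : Finset (ℕ × ℕ)} (hA : A ⊆ maxes μ lam)
    {p : ℕ × ℕ} (hp : p ∈ rhoCells μ lam A) (hμ : p ∉ μ.cells) :
    p ∈ skewCells μ lam := by
  rcases Finset.mem_union.1 hp with hp | hp
  · rcases Finset.mem_union.1 hp with hp | hp
    · exact absurd hp hμ
    · exact hforced_subset hp
  · exact maxes_subset (hA hp)

lemma rho_isLowerSet (hthin : IsThin (skewCells μ lam)) {A : Finset (ℕ × ℕ)}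
    (hA : A ⊆ maxes μ lam) : IsLowerSet (↑(rhoCells μ lam A) : Set (ℕ × ℕ)) := by
  apply isLowerSet_of_steps
  · -- vertical step: (i+1, j) ∈ ρ → (i, j) ∈ ρ
    intro i j h
    by_cases hμc : ((i : ℕ), j) ∈ μ.cells
    · exact Finset.mem_union_left _ (Finset.mem_union_left _ hμc)
    exfalso
    -- the cell (i+1,j) is in the skew part
    have hS : (i + 1, j) ∈ skewCells μ lam := by
      refine mem_rhoCells_sdiff hA h (fun hm => hμc ?_)
      exact (YoungDiagram.mem_cells _).2
        (μ.up_left_mem (Nat.le_succ i) (le_refl j) ((YoungDiagram.mem_cells _).1 hm))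
    have hup : ((i : ℕ), j) ∈ skewCells μ lam := by
      refine mem_skew.2 ⟨?_, hμc⟩
      exact (YoungDiagram.mem_cells _).2
        (lam.up_left_mem (Nat.le_succ i) (le_refl j)
          ((YoungDiagram.mem_cells _).1 (mem_skew.1 hS).1))
    have hct : ct ((i : ℕ), j) = ct (i + 1, j) + 1 := by unfold ct; push_cast; ring
    rcases Finset.mem_union.1 h with h' | h'
    · rcases Finset.mem_union.1 h' with h' | h'
      · exact hμc (by
          exact (YoungDiagram.mem_cells _).2
            (μ.up_left_mem (Nat.le_succ i) (le_refl j) ((YoungDiagram.mem_cells _).1 h')))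
      · -- (i+1,j) forced horizontal: right neighbour has same content as (i,j)
        have hr : (i + 1, j + 1) ∈ skewCells μ lam := (Finset.mem_filter.1 h').2
        have : ((i : ℕ), j) = (i + 1, j + 1) :=
          ct_inj hthin hup hr (by unfold ct; push_cast; ring)
        have := congrArg Prod.fst this
        omega
    · -- (i+1,j) ∈ A ⊆ maxes, but (i,j) has content +1
      have := (Finset.mem_filter.1 (hA h')).2 _ hup
      exact this hct
  · -- horizontal step: (i, j+1) ∈ ρ → (i, j) ∈ ρ
    intro i j h
    by_cases hμc : ((i : ℕ), j) ∈ μ.cells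
    · exact Finset.mem_union_left _ (Finset.mem_union_left _ hμc)
    have hS : (i, j + 1) ∈ skewCells μ lam := by
      refine mem_rhoCells_sdiff hA h (fun hm => hμc ?_)
      exact (YoungDiagram.mem_cells _).2
        (μ.up_left_mem (le_refl i) (Nat.le_succ j) ((YoungDiagram.mem_cells _).1 hm))
    have hleft : ((i : ℕ), j) ∈ skewCells μ lam := by
      refine mem_skew.2 ⟨?_, hμc⟩
      exact (YoungDiagram.mem_cells _).2
        (lam.up_left_mem (le_refl i) (Nat.le_succ j)
          ((YoungDiagram.mem_cells _).1 (mem_skew.1 hS).1))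
    exact Finset.mem_union_left _ (Finset.mem_union_right _
      (Finset.mem_filter.2 ⟨hleft, hS⟩))

def rho (μ lam : YoungDiagram) (hthin : IsThin (skewCells μ lam))
    {A : Finset (ℕ × ℕ)} (hA : A ⊆ maxes μ lam) : YoungDiagram :=
  ⟨rhoCells μ lam A, rho_isLowerSet hthin hA⟩

lemma rho_decomp (hsub : μ.cells ⊆ lam.cells) (hthin : IsThin (skewCells μ lam))
    {A : Finset (ℕ × ℕ)} (hA : A ⊆ maxes μ lam) :
    IsLambdaDecomp μ lam (rho μ lam hthin hA) := by
  refine ⟨fun p hp => Finset.mem_union_left _ (Finset.mem_union_left _ hp),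
    rhoCells_subset_lam hsub hA, ?_, ?_⟩
  · -- VStrip (lam.cells \ rhoCells)
    have key : ∀ p ∈ lam.cells \ rhoCells μ lam A, ∀ q ∈ lam.cells \ rhoCells μ lam A,
        p.1 = q.1 → p.2 < q.2 → False := by
      intro p hp q hq h1 h2
      obtain ⟨hpl, hpr⟩ := Finset.mem_sdiff.1 hp
      obtain ⟨hql, hqr⟩ := Finset.mem_sdiff.1 hq
      have hpS : p ∈ skewCells μ lam :=
        mem_skew.2 ⟨hpl, fun hm => hpr (Finset.mem_union_left _ (Finset.mem_union_left _ hm))⟩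
      have hqS : q ∈ skewCells μ lam :=
        mem_skew.2 ⟨hql, fun hm => hqr (Finset.mem_union_left _ (Finset.mem_union_left _ hm))⟩
      have hr : (p.1, p.2 + 1) ∈ skewCells μ lam :=
        mem_between hpS hqS (le_refl _) (Nat.le_succ _) (by omega) (by omega)
      exact hpr (Finset.mem_union_left _ (Finset.mem_union_right _
        (Finset.mem_filter.2 ⟨hpS, hr⟩)))
    intro p hp q hq h
    rcases lt_trichotomy p.2 q.2 with h2 | h2 | h2
    · exact (key p hp q hq h h2).elim
    · exact Prod.ext h h2
    · exact ((key q hq p hp h.symm h2).elim)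
  · -- HStrip (rhoCells \ μ.cells)
    have key : ∀ p ∈ rhoCells μ lam A \ μ.cells, ∀ q ∈ rhoCells μ lam A \ μ.cells,
        p.2 = q.2 → p.1 < q.1 → False := by
      intro p hp q hq h1 h2
      obtain ⟨hpr, hpμ⟩ := Finset.mem_sdiff.1 hp
      obtain ⟨hqr, hqμ⟩ := Finset.mem_sdiff.1 hq
      have hpS : p ∈ skewCells μ lam := mem_rhoCells_sdiff hA hpr hpμ
      have hqS : q ∈ skewCells μ lam := mem_rhoCells_sdiff hA hqr hqμ
      obtain ⟨a, ha⟩ : ∃ a, q.1 = a + 1 := ⟨q.1 - 1, by omega⟩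
      have hr : (a, q.2) ∈ skewCells μ lam :=
        mem_between hpS hqS (by omega) (by omega) (by omega) (le_refl _)
      have hct : ct (a, q.2) = ct q + 1 := by unfold ct; push_cast; omega
      rcases Finset.mem_union.1 hqr with hq' | hq'
      · rcases Finset.mem_union.1 hq' with hq' | hq'
        · exact hqμ hq'
        · have hrq : (q.1, q.2 + 1) ∈ skewCells μ lam := (Finset.mem_filter.1 hq').2
          have heq : (a, q.2) = (q.1, q.2 + 1) :=
            ct_inj hthin hr hrq (by unfold ct; push_cast; omega)
          have := congrArg Prod.fst heq
          omega
      · exact (Finset.mem_filter.1 (hA hq')).2 _ hr hct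
    intro p hp q hq h
    rcases lt_trichotomy p.1 q.1 with h2 | h2 | h2
    · exact (key p hp q hq h h2).elim
    · exact Prod.ext h2 h
    · exact ((key q hq p hp h.symm h2).elim)

lemma rho_eq (hthin : IsThin (skewCells μ lam)) {ρ : YoungDiagram}
    (hρ : IsLambdaDecomp μ lam ρ) :
    ρ.cells = rhoCells μ lam (maxes μ lam ∩ ρ.cells) := by
  obtain ⟨hμρ, hρl, hV, hH⟩ := hρ
  ext p
  constructor
  · intro hp
    by_cases hμc : p ∈ μ.cells
    · exact Finset.mem_union_left _ (Finset.mem_union_left _ hμc)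
    have hpS : p ∈ skewCells μ lam := mem_skew.2 ⟨hρl hp, hμc⟩
    by_cases hm : p ∈ maxes μ lam
    · exact Finset.mem_union_right _ (Finset.mem_inter.2 ⟨hm, hp⟩)
    -- not maximal: some q has content ct p + 1
    have : ∃ q ∈ skewCells μ lam, ct q = ct p + 1 := by
      by_contra hcon
      push_neg at hcon
      exact hm (Finset.mem_filter.2 ⟨hpS, hcon⟩)
    obtain ⟨q, hqS, hcq⟩ := this
    rcases consec hthin hpS hqS hcq with ⟨e1, e2⟩ | ⟨e1, e2⟩
    · -- q is the right neighbour : p is hforced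
      have : (p.1, p.2 + 1) ∈ skewCells μ lam := by
        have : (p.1, p.2 + 1) = q := Prod.ext e1.symm e2.symm
        rw [this]; exact hqS
      exact Finset.mem_union_left _ (Finset.mem_union_right _
        (Finset.mem_filter.2 ⟨hpS, this⟩))
    · -- q is the upper neighbour : contradiction with HStrip
      exfalso
      have hqρ : q ∈ ρ.cells := by
        have := ρ.up_left_mem (by omega : q.1 ≤ p.1) (by omega : q.2 ≤ p.2)
          ((YoungDiagram.mem_cells _).1 hp)
        exact (YoungDiagram.mem_cells _).2 this
      have heq := hH q (Finset.mem_sdiff.2 ⟨hqρ, (mem_skew.1 hqS).2⟩)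
        p (Finset.mem_sdiff.2 ⟨hp, hμc⟩) e2
      have := congrArg Prod.fst heq
      omega
  · intro hp
    rcases Finset.mem_union.1 hp with hp' | hp'
    · rcases Finset.mem_union.1 hp' with hp' | hp'
      · exact hμρ hp'
      · -- hforced ⊆ ρ.cells
        obtain ⟨hpS, hr⟩ := Finset.mem_filter.1 hp'
        by_contra hpρ
        have hpd : p ∈ lam.cells \ ρ.cells :=
          Finset.mem_sdiff.2 ⟨(mem_skew.1 hpS).1, hpρ⟩
        by_cases hrρ : (p.1, p.2 + 1) ∈ ρ.cells
        · exact hpρ ((YoungDiagram.mem_cells _).2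
            (ρ.up_left_mem (le_refl p.1) (Nat.le_succ p.2)
              ((YoungDiagram.mem_cells _).1 hrρ)))
        · have hrd : (p.1, p.2 + 1) ∈ lam.cells \ ρ.cells :=
            Finset.mem_sdiff.2 ⟨(mem_skew.1 hr).1, hrρ⟩
          have := hV p hpd (p.1, p.2 + 1) hrd rfl
          have := congrArg Prod.snd this
          omega
    · exact (Finset.mem_inter.1 hp').2

lemma inter_rhoCells {A : Finset (ℕ × ℕ)} (hA : A ⊆ maxes μ lam) :
    maxes μ lam ∩ rhoCells μ lam A = A := by
  ext p
  constructor
  · intro hp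
    obtain ⟨hm, hr⟩ := Finset.mem_inter.1 hp
    have hpS := maxes_subset hm
    rcases Finset.mem_union.1 hr with hp' | hp'
    · rcases Finset.mem_union.1 hp' with hp' | hp'
      · exact absurd hp' (mem_skew.1 hpS).2
      · exfalso
        have hr' : (p.1, p.2 + 1) ∈ skewCells μ lam := (Finset.mem_filter.1 hp').2
        exact (Finset.mem_filter.1 hm).2 _ hr' (by unfold ct; push_cast; ring)
    · exact hp'
  · intro hp
    exact Finset.mem_inter.2 ⟨hA hp, Finset.mem_union_right _ hp⟩

def cts (μ lam : YoungDiagram) : Finset ℤ := (skewCells μ lam).image ct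

lemma exists_cell {c : ℤ} (hc : c ∈ cts μ lam) :
    ∃ q ∈ skewCells μ lam, ct q = c := by
  simpa [cts, Finset.mem_image] using hc

noncomputable def RSet (μ lam : YoungDiagram) (p : ℕ × ℕ) : Finset ℤ :=
  (cts μ lam).filter fun c => ct p ≤ c ∧ ∀ x ∈ Finset.Icc (ct p) c, x ∈ cts μ lam

lemma self_mem_RSet {p : ℕ × ℕ} (hp : p ∈ skewCells μ lam) :
    ct p ∈ RSet μ lam p := by
  refine Finset.mem_filter.2 ⟨Finset.mem_image.2 ⟨p, hp, rfl⟩, le_refl _, ?_⟩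
  intro x hx
  have : x = ct p := by have := Finset.mem_Icc.1 hx; omega
  rw [this]
  exact Finset.mem_image.2 ⟨p, hp, rfl⟩

noncomputable def mx (μ lam : YoungDiagram) (p : ℕ × ℕ) (hp : p ∈ skewCells μ lam) : ℤ :=
  (RSet μ lam p).max' ⟨ct p, self_mem_RSet hp⟩

lemma mx_mem {p : ℕ × ℕ} (hp : p ∈ skewCells μ lam) :
    mx μ lam p hp ∈ RSet μ lam p := Finset.max'_mem _ _

lemma le_mx {p : ℕ × ℕ} (hp : p ∈ skewCells μ lam) : ct p ≤ mx μ lam p hp :=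
  (Finset.mem_filter.1 (mx_mem hp)).2.1

lemma mx_interval {p : ℕ × ℕ} (hp : p ∈ skewCells μ lam) :
    ∀ x ∈ Finset.Icc (ct p) (mx μ lam p hp), x ∈ cts μ lam :=
  (Finset.mem_filter.1 (mx_mem hp)).2.2

lemma mx_succ_not {p : ℕ × ℕ} (hp : p ∈ skewCells μ lam) :
    mx μ lam p hp + 1 ∉ cts μ lam := by
  intro h
  have : mx μ lam p hp + 1 ∈ RSet μ lam p := by
    refine Finset.mem_filter.2 ⟨h, by have := le_mx hp; omega, ?_⟩
    intro x hx
    have hx' := Finset.mem_Icc.1 hx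
    by_cases hle : x ≤ mx μ lam p hp
    · exact mx_interval hp x (Finset.mem_Icc.2 ⟨hx'.1, hle⟩)
    · have : x = mx μ lam p hp + 1 := by omega
      rw [this]; exact h
  have h2 : mx μ lam p hp + 1 ≤ mx μ lam p hp := Finset.le_max' _ _ this
  omega

lemma mx_step {p q : ℕ × ℕ} (hp : p ∈ skewCells μ lam)
    (hq : q ∈ skewCells μ lam) (hc : ct q = ct p + 1) :
    mx μ lam q hq = mx μ lam p hp := by
  have hq_cts : ct q ∈ cts μ lam := Finset.mem_image.2 ⟨q, hq, rfl⟩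
  have hp_cts : ct p ∈ cts μ lam := Finset.mem_image.2 ⟨p, hp, rfl⟩
  have h1 : ct p + 1 ∈ RSet μ lam p := by
    refine Finset.mem_filter.2 ⟨hc ▸ hq_cts, by omega, ?_⟩
    intro x hx
    have hx' := Finset.mem_Icc.1 hx
    rcases (by omega : x = ct p ∨ x = ct p + 1) with h | h
    · rw [h]; exact hp_cts
    · rw [h]; exact hc ▸ hq_cts
  have hmp1 : ct p + 1 ≤ mx μ lam p hp := Finset.le_max' _ _ h1
  have h2 : mx μ lam p hp ∈ RSet μ lam q := by
    refine Finset.mem_filter.2 ⟨(Finset.mem_filter.1 (mx_mem hp)).1, by omega, ?_⟩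
    intro x hx
    have hx' := Finset.mem_Icc.1 hx
    exact mx_interval hp x (Finset.mem_Icc.2 ⟨by omega, hx'.2⟩)
  have h3 : mx μ lam q hq ∈ RSet μ lam p := by
    have hqle : ct q ≤ mx μ lam q hq := le_mx hq
    refine Finset.mem_filter.2 ⟨(Finset.mem_filter.1 (mx_mem hq)).1, by omega, ?_⟩
    intro x hx
    have hx' := Finset.mem_Icc.1 hx
    by_cases hxe : x = ct p
    · rw [hxe]; exact hp_cts
    · exact mx_interval hq x (Finset.mem_Icc.2 ⟨by omega, hx'.2⟩)
  have hle1 : mx μ lam p hp ≤ mx μ lam q hq := Finset.le_max' _ _ h2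
  have hle2 : mx μ lam q hq ≤ mx μ lam p hp := Finset.le_max' _ _ h3
  omega

lemma F0_exu (hthin : IsThin (skewCells μ lam)) {p : ℕ × ℕ}
    (hp : p ∈ skewCells μ lam) :
    ∃! q, q ∈ skewCells μ lam ∧ ct q = mx μ lam p hp := by
  obtain ⟨q, hq, hcq⟩ := exists_cell ((Finset.mem_filter.1 (mx_mem hp)).1)
  exact ⟨q, ⟨hq, hcq⟩, fun r ⟨hr, hcr⟩ => ct_inj hthin hr hq (hcr.trans hcq.symm)⟩

noncomputable def F0 (μ lam : YoungDiagram) (hthin : IsThin (skewCells μ lam))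
    (p : ℕ × ℕ) (hp : p ∈ skewCells μ lam) : ℕ × ℕ :=
  Finset.choose _ _ (F0_exu hthin hp)

lemma F0_mem (hthin : IsThin (skewCells μ lam)) {p : ℕ × ℕ}
    (hp : p ∈ skewCells μ lam) : F0 μ lam hthin p hp ∈ skewCells μ lam :=
  Finset.choose_mem _ _ _

lemma F0_ct (hthin : IsThin (skewCells μ lam)) {p : ℕ × ℕ}
    (hp : p ∈ skewCells μ lam) : ct (F0 μ lam hthin p hp) = mx μ lam p hp :=
  Finset.choose_property (fun q => ct q = mx μ lam p hp) _ (F0_exu hthin hp)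

lemma F0_congr (hthin : IsThin (skewCells μ lam)) {p q : ℕ × ℕ}
    (hp : p ∈ skewCells μ lam) (hq : q ∈ skewCells μ lam)
    (h : mx μ lam p hp = mx μ lam q hq) :
    F0 μ lam hthin p hp = F0 μ lam hthin q hq :=
  ct_inj hthin (F0_mem hthin hp) (F0_mem hthin hq)
    (by rw [F0_ct, F0_ct, h])

lemma F0_mem_maxes (hthin : IsThin (skewCells μ lam)) {p : ℕ × ℕ}
    (hp : p ∈ skewCells μ lam) : F0 μ lam hthin p hp ∈ maxes μ lam := by
  refine Finset.mem_filter.2 ⟨F0_mem hthin hp, ?_⟩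
  intro q hq hcq
  apply mx_succ_not hp
  rw [← F0_ct hthin hp, ← hcq]
  exact Finset.mem_image.2 ⟨q, hq, rfl⟩

lemma F0_self (hthin : IsThin (skewCells μ lam)) {q : ℕ × ℕ}
    (hm : q ∈ maxes μ lam) :
    F0 μ lam hthin q (maxes_subset hm) = q := by
  have hq := maxes_subset hm
  have hmx : mx μ lam q hq = ct q := by
    by_contra hne
    have hlt : ct q + 1 ≤ mx μ lam q hq := by have := le_mx hq; omega
    have : ct q + 1 ∈ cts μ lam :=
      mx_interval hq _ (Finset.mem_Icc.2 ⟨by omega, hlt⟩)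
    obtain ⟨r, hr, hcr⟩ := exists_cell this
    exact (Finset.mem_filter.1 hm).2 r hr hcr
  exact ct_inj hthin (F0_mem hthin hq) hq (by rw [F0_ct, hmx])

lemma adj_of_consec (hthin : IsThin (skewCells μ lam)) {p q : ℕ × ℕ}
    (hp : p ∈ skewCells μ lam) (hq : q ∈ skewCells μ lam)
    (hc : ct q = ct p + 1) : Adj p q := by
  rcases consec hthin hp hq hc with ⟨e1, e2⟩ | ⟨e1, e2⟩
  · exact Or.inl ⟨e1.symm, Or.inr e2⟩
  · exact Or.inr ⟨e2.symm, Or.inl e1⟩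

abbrev SkewRel (μ lam : YoungDiagram) :=
  fun a b : {c : ℕ × ℕ // c ∈ skewCells μ lam} => Adj a.1 b.1

lemma chain (hthin : IsThin (skewCells μ lam)) :
    ∀ (n : ℕ) (p : ℕ × ℕ) (hp : p ∈ skewCells μ lam),
      mx μ lam p hp = ct p + n →
      Quot.mk (SkewRel μ lam) ⟨p, hp⟩ =
        Quot.mk (SkewRel μ lam) ⟨F0 μ lam hthin p hp, F0_mem hthin hp⟩ := by
  intro n
  induction n with
  | zero =>
    intro p hp hmx
    have : F0 μ lam hthin p hp = p :=
      ct_inj hthin (F0_mem hthin hp) hp (by rw [F0_ct, hmx]; push_cast; ring)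
    exact congrArg (Quot.mk (SkewRel μ lam)) (Subtype.ext this.symm)
  | succ n ih =>
    intro p hp hmx
    have h1 : ct p + 1 ∈ cts μ lam :=
      mx_interval hp _ (Finset.mem_Icc.2 ⟨by omega, by rw [hmx]; push_cast; omega⟩)
    obtain ⟨q, hq, hcq⟩ := exists_cell h1
    have hadj : Adj p q := adj_of_consec hthin hp hq hcq
    have hmxq : mx μ lam q hq = mx μ lam p hp := mx_step hp hq hcq
    have h2 : mx μ lam q hq = ct q + n := by
      rw [hmxq, hmx, hcq]; push_cast; ring
    calc Quot.mk (SkewRel μ lam) ⟨p, hp⟩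
        = Quot.mk (SkewRel μ lam) ⟨q, hq⟩ := Quot.sound hadj
      _ = Quot.mk (SkewRel μ lam) ⟨F0 μ lam hthin q hq, F0_mem hthin hq⟩ :=
          ih q hq h2
      _ = Quot.mk (SkewRel μ lam) ⟨F0 μ lam hthin p hp, F0_mem hthin hp⟩ :=
          congrArg (Quot.mk (SkewRel μ lam))
            (Subtype.ext (F0_congr hthin hq hp hmxq))

lemma quot_eq_F0 (hthin : IsThin (skewCells μ lam)) (p : ℕ × ℕ)
    (hp : p ∈ skewCells μ lam) :
    Quot.mk (SkewRel μ lam) ⟨p, hp⟩ =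
      Quot.mk (SkewRel μ lam) ⟨F0 μ lam hthin p hp, F0_mem hthin hp⟩ := by
  have h := le_mx hp
  exact chain hthin (mx μ lam p hp - ct p).toNat p hp (by omega)

lemma adj_ct {a b : ℕ × ℕ} (h : Adj a b) : ct b = ct a + 1 ∨ ct a = ct b + 1 := by
  unfold Adj at h
  unfold ct
  omega

noncomputable def Phi (μ lam : YoungDiagram) (hthin : IsThin (skewCells μ lam)) :
    Quot (SkewRel μ lam) → {q : ℕ × ℕ // q ∈ maxes μ lam} :=
  Quot.lift (fun a => ⟨F0 μ lam hthin a.1 a.2, F0_mem_maxes hthin a.2⟩)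
    (by
      intro a b hab
      rcases adj_ct hab with h | h
      · exact Subtype.ext (F0_congr hthin a.2 b.2 (mx_step a.2 b.2 h).symm)
      · exact Subtype.ext (F0_congr hthin a.2 b.2 (mx_step b.2 a.2 h)))

lemma Phi_bij (hthin : IsThin (skewCells μ lam)) :
    Function.Bijective (Phi μ lam hthin) := by
  constructor
  · intro x y h
    induction x using Quot.ind with | _ a => ?_
    induction y using Quot.ind with | _ b => ?_
    have hF : F0 μ lam hthin a.1 a.2 = F0 μ lam hthin b.1 b.2 := by
      have := congrArg Subtype.val h
      exact this
    calc Quot.mk (SkewRel μ lam) a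
        = Quot.mk (SkewRel μ lam) ⟨a.1, a.2⟩ := rfl
      _ = Quot.mk (SkewRel μ lam) ⟨F0 μ lam hthin a.1 a.2, F0_mem hthin a.2⟩ :=
          quot_eq_F0 hthin a.1 a.2
      _ = Quot.mk (SkewRel μ lam) ⟨F0 μ lam hthin b.1 b.2, F0_mem hthin b.2⟩ :=
          congrArg (Quot.mk (SkewRel μ lam)) (Subtype.ext hF)
      _ = Quot.mk (SkewRel μ lam) ⟨b.1, b.2⟩ := (quot_eq_F0 hthin b.1 b.2).symm
      _ = Quot.mk (SkewRel μ lam) b := rfl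
  · rintro ⟨q, hqm⟩
    refine ⟨Quot.mk (SkewRel μ lam) ⟨q, maxes_subset hqm⟩, ?_⟩
    exact Subtype.ext (F0_self hthin hqm)

lemma comp_card (hthin : IsThin (skewCells μ lam)) :
    numComponents (skewCells μ lam) = (maxes μ lam).card := by
  unfold numComponents
  have h1 : Nat.card (Quot (SkewRel μ lam)) =
      Nat.card {q : ℕ × ℕ // q ∈ maxes μ lam} :=
    Nat.card_congr (Equiv.ofBijective _ (Phi_bij hthin))
  rw [show (fun a b : {c : ℕ × ℕ // c ∈ skewCells μ lam} => Adj a.1 b.1) =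
      SkewRel μ lam from rfl, h1]
  simp [Nat.card_eq_fintype_card, Fintype.card_coe]

lemma thin_of_decomp {ρ : YoungDiagram} (hρ : IsLambdaDecomp μ lam ρ) :
    IsThin (skewCells μ lam) := by
  obtain ⟨hμρ, hρl, hV, hH⟩ := hρ
  rintro i j ⟨h00, h10, h01, h11⟩
  by_cases h : (i, j) ∈ ρ.cells
  · have h10' : (i + 1, j) ∉ ρ.cells := by
      intro h'
      have := hH (i, j) (Finset.mem_sdiff.2 ⟨h, (mem_skew.1 h00).2⟩)
        (i + 1, j) (Finset.mem_sdiff.2 ⟨h', (mem_skew.1 h10).2⟩) rfl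
      have := congrArg Prod.fst this
      omega
    have h11' : (i + 1, j + 1) ∈ ρ.cells := by
      by_contra h''
      have := hV (i + 1, j) (Finset.mem_sdiff.2 ⟨(mem_skew.1 h10).1, h10'⟩)
        (i + 1, j + 1) (Finset.mem_sdiff.2 ⟨(mem_skew.1 h11).1, h''⟩) rfl
      have := congrArg Prod.snd this
      omega
    have h01' : (i, j + 1) ∈ ρ.cells := (YoungDiagram.mem_cells _).2
      (ρ.up_left_mem (Nat.le_succ i) (le_refl (j + 1))
        ((YoungDiagram.mem_cells _).1 h11'))
    have := hH (i, j + 1) (Finset.mem_sdiff.2 ⟨h01', (mem_skew.1 h01).2⟩)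
      (i + 1, j + 1) (Finset.mem_sdiff.2 ⟨h11', (mem_skew.1 h11).2⟩) rfl
    have := congrArg Prod.fst this
    omega
  · have h01' : (i, j + 1) ∈ ρ.cells := by
      by_contra h'
      have := hV (i, j) (Finset.mem_sdiff.2 ⟨(mem_skew.1 h00).1, h⟩)
        (i, j + 1) (Finset.mem_sdiff.2 ⟨(mem_skew.1 h01).1, h'⟩) rfl
      have := congrArg Prod.snd this
      omega
    have h11' : (i + 1, j + 1) ∉ ρ.cells := by
      intro h''
      have := hH (i, j + 1) (Finset.mem_sdiff.2 ⟨h01', (mem_skew.1 h01).2⟩)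
        (i + 1, j + 1) (Finset.mem_sdiff.2 ⟨h'', (mem_skew.1 h11).2⟩) rfl
      have := congrArg Prod.fst this
      omega
    have h10' : (i + 1, j) ∈ ρ.cells := by
      by_contra h'
      have := hV (i + 1, j) (Finset.mem_sdiff.2 ⟨(mem_skew.1 h10).1, h'⟩)
        (i + 1, j + 1) (Finset.mem_sdiff.2 ⟨(mem_skew.1 h11).1, h11'⟩) rfl
      have := congrArg Prod.snd this
      omega
    exact h ((YoungDiagram.mem_cells _).2
      (ρ.up_left_mem (Nat.le_succ i) (le_refl j)
        ((YoungDiagram.mem_cells _).1 h10')))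

lemma count_decomps (hsub : μ.cells ⊆ lam.cells)
    (hthin : IsThin (skewCells μ lam)) :
    Set.ncard {ρ : YoungDiagram | IsLambdaDecomp μ lam ρ}
      = 2 ^ numComponents (skewCells μ lam) := by
  have hb : Function.Bijective
      (fun A : {A : Finset (ℕ × ℕ) // A ⊆ maxes μ lam} =>
        (⟨rho μ lam hthin A.2, rho_decomp hsub hthin A.2⟩ :
          {ρ : YoungDiagram // IsLambdaDecomp μ lam ρ})) := by
    constructor
    · rintro ⟨A, hA⟩ ⟨B, hB⟩ h
      have h1 : rhoCells μ lam A = rhoCells μ lam B :=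
        congrArg (fun x : {ρ : YoungDiagram // IsLambdaDecomp μ lam ρ} =>
          x.val.cells) h
      have h2 := congrArg (fun s => maxes μ lam ∩ s) h1
      simp only [inter_rhoCells hA, inter_rhoCells hB] at h2
      exact Subtype.ext h2
    · rintro ⟨ρ, hρ⟩
      refine ⟨⟨maxes μ lam ∩ ρ.cells, Finset.inter_subset_left⟩, ?_⟩
      apply Subtype.ext
      apply YoungDiagram.ext
      exact (rho_eq hthin hρ).symm
  have h1 : Set.ncard {ρ : YoungDiagram | IsLambdaDecomp μ lam ρ}
      = Nat.card {ρ : YoungDiagram // IsLambdaDecomp μ lam ρ} :=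
    (Nat.card_coe_set_eq _).symm
  have h2 : Nat.card {ρ : YoungDiagram // IsLambdaDecomp μ lam ρ}
      = Nat.card {A : Finset (ℕ × ℕ) // A ⊆ maxes μ lam} :=
    (Nat.card_congr (Equiv.ofBijective _ hb)).symm
  have h3 : Nat.card {A : Finset (ℕ × ℕ) // A ⊆ maxes μ lam}
      = 2 ^ (maxes μ lam).card := by
    calc Nat.card {A : Finset (ℕ × ℕ) // A ⊆ maxes μ lam}
        = Nat.card {A : Finset (ℕ × ℕ) // A ∈ (maxes μ lam).powerset} :=
          Nat.card_congr (Equiv.subtypeEquivRight fun A => Finset.mem_powerset.symm)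
      _ = ((maxes μ lam).powerset).card := Nat.card_eq_finsetCard _
      _ = 2 ^ (maxes μ lam).card := Finset.card_powerset _
  rw [h1, h2, h3, comp_card hthin]

end ThinLambda

/-- If `λ/μ` is thin then it has exactly `2^c` Λ-decompositions, where `c` is
its number of connected components; and if `λ/μ` admits any Λ-decomposition
then it is thin. -/
theorem thin_lambda_decompositions (μ lam : YoungDiagram)
    (hsub : μ.cells ⊆ lam.cells) :
    (IsThin (skewCells μ lam) →
      Set.ncard {ρ : YoungDiagram | IsLambdaDecomp μ lam ρ}
        = 2 ^ numComponents (skewCells μ lam)) ∧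
    ((∃ ρ : YoungDiagram, IsLambdaDecomp μ lam ρ) → IsThin (skewCells μ lam)) := by
  exact ⟨fun hthin => ThinLambda.count_decomps hsub hthin,
    fun ⟨ρ, hρ⟩ => ThinLambda.thin_of_decomp hρ⟩
end

section
/- For $w \in S_+$ and $i > 0$, the divided difference operator $A_i^a$ in the second variable set acts on double Schubert polynomials by $A_i^a \mathfrak{S}_w(x; a) = -\mathfrak{S}_{s_i w}(x; a)$ if $\ell(s_i w) < \ell(w)$, and $A_i^a \mathfrak{S}_w(x;a) = 0$ otherwise. -/
open MvPolynomial

/-- The group `S₊` of permutations of `ℕ` moving only finitely many elements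
(the positive integers are relabeled `0, 1, 2, …`). -/
def SPlus : Subgroup (Equiv.Perm ℕ) where
  carrier := {w | {i : ℕ | w i ≠ i}.Finite}
  one_mem' := by
    have h : {i : ℕ | (1 : Equiv.Perm ℕ) i ≠ i} = ∅ := by ext i; simp
    show ({i : ℕ | (1 : Equiv.Perm ℕ) i ≠ i}).Finite
    rw [h]; exact Set.finite_empty
  mul_mem' := by
    intro a b ha hb
    show ({i : ℕ | (a * b) i ≠ i}).Finite
    refine (Set.Finite.union ha hb).subset ?_
    intro j hj
    simp only [Set.mem_setOf_eq] at hj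
    by_contra hc
    simp only [Set.mem_union, Set.mem_setOf_eq, not_or, not_not] at hc
    exact hj (by rw [Equiv.Perm.mul_apply, hc.2, hc.1])
  inv_mem' := by
    intro a ha
    show ({i : ℕ | a⁻¹ i ≠ i}).Finite
    have h : {i : ℕ | a⁻¹ i ≠ i} = {i : ℕ | a i ≠ i} := by
      ext i
      simp only [Set.mem_setOf_eq, ne_eq, Equiv.Perm.inv_eq_iff_eq]
      exact not_congr eq_comm
    rw [h]; exact ha

/-- The simple transposition `s_i = (i, i+1)` as an element of `S₊`. -/
def sN (i : ℕ) : SPlus :=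
  ⟨Equiv.swap i (i + 1), by
    show ({j : ℕ | Equiv.swap i (i + 1) j ≠ j}).Finite
    refine ((Set.finite_singleton (i + 1)).insert i).subset ?_
    intro j hj
    simp only [Set.mem_setOf_eq] at hj
    by_contra hc
    simp only [Set.mem_insert_iff, Set.mem_singleton_iff, not_or] at hc
    exact hj (Equiv.swap_apply_of_ne_of_ne hc.1 hc.2)⟩

/-- Coxeter length = number of inversions. -/
noncomputable def lenS (w : SPlus) : ℕ :=
  Nat.card {p : ℕ × ℕ | p.1 < p.2 ∧ (w : Equiv.Perm ℕ) p.2 < (w : Equiv.Perm ℕ) p.1}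

/-- The defining properties of the family of Schubert polynomials `𝔖_w`, `w ∈ S₊`:
`𝔖_id = 1`; `𝔖_w` is homogeneous of degree `ℓ(w)`; and
`A_i 𝔖_w = 𝔖_{w sᵢ}` if `ℓ(w sᵢ) < ℓ(w)` and `A_i 𝔖_w = 0` otherwise, where the
divided difference relations are expressed via
`(x_i - x_{i+1}) 𝔖_{w sᵢ} = 𝔖_w - s_i 𝔖_w` resp. `s_i 𝔖_w = 𝔖_w`. -/
def SchubertFamily (S : SPlus → MvPolynomial ℕ ℚ) : Prop :=
  S 1 = 1 ∧
  (∀ w : SPlus, (S w).IsHomogeneous (lenS w)) ∧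
  (∀ (w : SPlus) (i : ℕ),
    if lenS (w * sN i) < lenS w then
      (X i - X (i + 1)) * S (w * sN i)
        = S w - rename (fun j => Equiv.swap i (i + 1) j) (S w)
    else rename (fun j => Equiv.swap i (i + 1) j) (S w) = S w)

/-- The ring `ℚ[x; a]` of double Schubert polynomials: the `x`-variables are
indexed by `Sum.inl`, the `a`-variables by `Sum.inr`. -/
abbrev DR := MvPolynomial (ℕ ⊕ ℕ) ℚ

/-- The exchange of `x_i` and `x_{i+1}`. -/
noncomputable def sx (i : ℕ) : DR →ₐ[ℚ] DR :=
  rename (fun v => Equiv.swap (Sum.inl i : ℕ ⊕ ℕ) (Sum.inl (i + 1)) v)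

/-- The exchange of `a_i` and `a_{i+1}`. -/
noncomputable def sa (i : ℕ) : DR →ₐ[ℚ] DR :=
  rename (fun v => Equiv.swap (Sum.inr i : ℕ ⊕ ℕ) (Sum.inr (i + 1)) v)

/-- The substitution setting `x_i = a_i` for all `i`. -/
noncomputable def setXtoA : DR →ₐ[ℚ] DR :=
  rename (Sum.elim Sum.inr Sum.inr)

/-- The defining properties of the family of double Schubert polynomials
`𝔖_w(x; a)`, `w ∈ S₊` (Theorem `thm:double`): `𝔖_id = 1`; `𝔖_w(a; a) = 0` for
`w ≠ id`; and `A_i^x 𝔖_w = 𝔖_{w sᵢ}` if `ℓ(w sᵢ) < ℓ(w)`, `A_i^x 𝔖_w = 0`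
otherwise. -/
def DoubleSchubertFamily (D : SPlus → DR) : Prop :=
  D 1 = 1 ∧
  (∀ w : SPlus, w ≠ 1 → setXtoA (D w) = 0) ∧
  (∀ (w : SPlus) (i : ℕ),
    if lenS (w * sN i) < lenS w then
      (X (Sum.inl i) - X (Sum.inl (i + 1))) * D (w * sN i) = D w - sx i (D w)
    else sx i (D w) = D w)

/-- The underlying function of the longest element `w₀⁽ⁿ⁾` of `Sₙ`. -/
def w0fun (n : ℕ) : ℕ → ℕ := fun i => if i < n then n - 1 - i else i

lemma w0fun_involutive (n : ℕ) : Function.Involutive (w0fun n) := by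
  intro i
  unfold w0fun
  by_cases h : i < n
  · rw [if_pos h, if_pos (by omega)]
    omega
  · rw [if_neg h, if_neg h]

/-- The longest element `w₀⁽ⁿ⁾` of `Sₙ` as a permutation. -/
def w0perm (n : ℕ) : Equiv.Perm ℕ :=
  Function.Involutive.toPerm (w0fun n) (w0fun_involutive n)

/-- The longest element `w₀⁽ⁿ⁾` of `Sₙ` as an element of `S₊`. -/
def w0 (n : ℕ) : SPlus :=
  ⟨w0perm n, by
    show ({j : ℕ | w0perm n j ≠ j}).Finite
    refine (Set.finite_Iio n).subset ?_
    intro j hj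
    simp only [Set.mem_setOf_eq] at hj
    by_contra hc
    simp only [Set.mem_Iio, not_lt] at hc
    refine hj ?_
    show w0fun n j = j
    unfold w0fun
    rw [if_neg (by omega)]⟩

/-- The double Schubert polynomials, defined top-down:
`𝔖_{w₀⁽ⁿ⁾}(x; a) = ∏_{i+j ≤ n} (x_i - a_j)` and `𝔖_w = A_i^x 𝔖_{w sᵢ}` whenever
`ℓ(w sᵢ) > ℓ(w)`. -/
def DoubleSchubertFamily' (D : SPlus → DR) : Prop :=
  (∀ n : ℕ, D (w0 n) =
    ∏ p ∈ (Finset.range n ×ˢ Finset.range n).filter (fun p => p.1 + p.2 + 2 ≤ n),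
      (X (Sum.inl p.1) - X (Sum.inr p.2))) ∧
  (∀ (w : SPlus) (i : ℕ), lenS w < lenS (w * sN i) →
    (X (Sum.inl i) - X (Sum.inl (i + 1))) * D w
      = D (w * sN i) - sx i (D (w * sN i)))

/-- The transposition `(i j)` as an element of `S₊`. -/
def swapS (i j : ℕ) : SPlus :=
  ⟨Equiv.swap i j, by
    show ({k : ℕ | Equiv.swap i j k ≠ k}).Finite
    refine ((Set.finite_singleton j).insert i).subset ?_
    intro k hk
    simp only [Set.mem_setOf_eq] at hk
    by_contra hc
    simp only [Set.mem_insert_iff, Set.mem_singleton_iff, not_or] at hc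
    exact hk (Equiv.swap_apply_of_ne_of_ne hc.1 hc.2)⟩

/-- Bruhat order on `S₊`: the reflexive-transitive closure of right
multiplication by a transposition which increases length. -/
def BruhatLe (v w : SPlus) : Prop :=
  Relation.ReflTransGen
    (fun a b : SPlus => lenS a < lenS b ∧ ∃ i j : ℕ, i ≠ j ∧ b = a * swapS i j) v w

/-- The substitution `x_i ↦ a_{w(i)}`, `a_i ↦ a_i`. -/
noncomputable def specAt (w : SPlus) : DR →ₐ[ℚ] DR :=
  rename (Sum.elim (fun i => Sum.inr ((w : Equiv.Perm ℕ) i)) Sum.inr)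


/-! ### Auxiliary combinatorics of lengths -/

namespace SchubAux

open Equiv Finset

/-- `w` fixes everything from `n` on. -/
def FixedFrom (w : Equiv.Perm ℕ) (n : ℕ) : Prop := ∀ m, n ≤ m → w m = m

lemma exists_fixedFrom (w : SPlus) : ∃ n : ℕ, FixedFrom (↑w) n := by
  have hw : ({i : ℕ | (w : Equiv.Perm ℕ) i ≠ i}).Finite := w.2
  obtain ⟨n, hn⟩ := hw.bddAbove
  refine ⟨n + 1, fun m hm => ?_⟩
  by_contra hc
  have : m ≤ n := hn hc
  omega

lemma FixedFrom.maps_lt {w : Equiv.Perm ℕ} {n : ℕ} (h : FixedFrom w n)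
    {p : ℕ} (hp : p < n) : w p < n := by
  by_contra hc
  push_neg at hc
  have := h _ hc
  have := w.injective this
  omega

lemma FixedFrom.mul_swap {w : Equiv.Perm ℕ} {n j : ℕ} (h : FixedFrom w n) (hj : j + 1 < n) :
    FixedFrom (w * Equiv.swap j (j+1)) n := by
  intro m hm
  rw [Equiv.Perm.mul_apply, Equiv.swap_apply_of_ne_of_ne (by omega) (by omega)]
  exact h m hm

lemma FixedFrom.inv {w : Equiv.Perm ℕ} {n : ℕ} (h : FixedFrom w n) :
    FixedFrom w⁻¹ n := by
  intro m hm
  have := h m hm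
  rw [Equiv.Perm.inv_eq_iff_eq]
  exact this.symm

lemma swap_lt {j n x : ℕ} (hx : x < n) (hj : j + 1 < n) : Equiv.swap j (j+1) x < n := by
  simp only [Equiv.swap_apply_def]
  split_ifs <;> omega

lemma swap_preserve {j p q : ℕ} (h : p < q) (hne : ¬(p = j ∧ q = j + 1)) :
    Equiv.swap j (j+1) p < Equiv.swap j (j+1) q := by
  simp only [Equiv.swap_apply_def]
  split_ifs <;> omega

/-- The inversions of `w` inside `[0,n)²`. -/
def invF (n : ℕ) (w : Equiv.Perm ℕ) : Finset (ℕ × ℕ) :=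
  (Finset.range n ×ˢ Finset.range n).filter (fun p => p.1 < p.2 ∧ w p.2 < w p.1)

lemma mem_invF {n : ℕ} {w : Equiv.Perm ℕ} {p : ℕ × ℕ} :
    p ∈ invF n w ↔ p.1 < n ∧ p.2 < n ∧ p.1 < p.2 ∧ w p.2 < w p.1 := by
  simp [invF, Finset.mem_filter, Finset.mem_product, and_assoc]

lemma lenS_eq_card {w : SPlus} {n : ℕ} (h : FixedFrom (↑w) n) :
    lenS w = (invF n ↑w).card := by
  have hset : {p : ℕ × ℕ | p.1 < p.2 ∧ (w : Equiv.Perm ℕ) p.2 < (w : Equiv.Perm ℕ) p.1}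
      = ↑(invF n ↑w) := by
    ext ⟨a, b⟩
    simp only [Set.mem_setOf_eq, Finset.coe_filter, invF, Finset.mem_product,
      Finset.mem_range, Set.mem_setOf_eq]
    constructor
    · rintro ⟨hab, hw⟩
      refine ⟨⟨?_, ?_⟩, hab, hw⟩
      · by_contra hc
        push_neg at hc
        have h1 := h a hc
        have h2 : (w : Equiv.Perm ℕ) b < a := h1 ▸ hw
        have h3 : (w : Equiv.Perm ℕ) b ≠ b := by omega
        have h4 : b < n := by
          by_contra hc2; push_neg at hc2; exact h3 (h b hc2)
        omega
      · by_contra hc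
        push_neg at hc
        have h1 := h b hc
        have h2 : b < (w : Equiv.Perm ℕ) a := h1 ▸ hw
        have h3 : (w : Equiv.Perm ℕ) a ≠ a := by omega
        have h4 : a < n := by
          by_contra hc2; push_neg at hc2; exact h3 (h a hc2)
        have := h.maps_lt h4
        omega
    · rintro ⟨_, hab, hw⟩; exact ⟨hab, hw⟩
  rw [lenS, hset, Nat.card_coe_set_eq, Set.ncard_coe_finset]

lemma lenS_le {w : SPlus} {n : ℕ} (h : FixedFrom (↑w) n) : lenS w ≤ n * n := by
  rw [lenS_eq_card h]
  calc (invF n ↑w).card ≤ (Finset.range n ×ˢ Finset.range n).card :=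
        Finset.card_le_card (Finset.filter_subset _ _)
    _ = n * n := by simp

lemma sN_coe (j : ℕ) : ((sN j : SPlus) : Equiv.Perm ℕ) = Equiv.swap j (j+1) := rfl

lemma mul_coe (a b : SPlus) : ((a * b : SPlus) : Equiv.Perm ℕ) = (↑a) * (↑b) := rfl

lemma inv_coe (a : SPlus) : ((a⁻¹ : SPlus) : Equiv.Perm ℕ) = (↑a)⁻¹ := rfl

lemma sN_mul_self (j : ℕ) : sN j * sN j = 1 := by
  apply Subtype.ext
  rw [mul_coe, sN_coe]
  exact Equiv.swap_mul_self _ _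

lemma sN_inv (j : ℕ) : (sN j)⁻¹ = sN j := by
  rw [eq_comm, eq_inv_iff_mul_eq_one, sN_mul_self]

lemma invF_mul_swap {w : Equiv.Perm ℕ} {n j : ℕ} (hfix : FixedFrom w n)
    (hj : j + 1 < n) (ha : w j < w (j+1)) :
    invF n (w * Equiv.swap j (j+1))
      = insert (j, j+1) ((invF n w).image
          (fun p => (Equiv.swap j (j+1) p.1, Equiv.swap j (j+1) p.2))) := by
  set σ := Equiv.swap j (j+1) with hσ
  ext ⟨a, b⟩
  simp only [mem_invF, Finset.mem_insert, Finset.mem_image, Equiv.Perm.mul_apply,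
    Prod.mk.injEq, Prod.exists]
  constructor
  · rintro ⟨han, hbn, hab, hw⟩
    by_cases hcase : a = j ∧ b = j + 1
    · exact Or.inl ⟨hcase.1, hcase.2⟩
    · refine Or.inr ⟨σ a, σ b, ⟨?_, ?_, ?_, ?_⟩, ?_, ?_⟩
      · exact swap_lt han hj
      · exact swap_lt hbn hj
      · exact swap_preserve hab hcase
      · exact hw
      · rw [hσ, Equiv.swap_apply_self]
      · rw [hσ, Equiv.swap_apply_self]
  · rintro (⟨rfl, rfl⟩ | ⟨p, q, ⟨hpn, hqn, hpq, hw⟩, rfl, rfl⟩)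
    · refine ⟨by omega, hj, by omega, ?_⟩
      rw [hσ, Equiv.swap_apply_left, Equiv.swap_apply_right]
      exact ha
    · have hne : ¬(p = j ∧ q = j + 1) := by
        rintro ⟨rfl, rfl⟩; omega
      refine ⟨swap_lt hpn hj, swap_lt hqn hj, swap_preserve hpq hne, ?_⟩
      rw [hσ, Equiv.swap_apply_self, Equiv.swap_apply_self]
      exact hw

lemma lenS_mul_sN_of_ascent {w : SPlus} {n j : ℕ} (hfix : FixedFrom (↑w) n)
    (hj : j + 1 < n) (ha : (w : Equiv.Perm ℕ) j < (w : Equiv.Perm ℕ) (j+1)) :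
    lenS (w * sN j) = lenS w + 1 := by
  have hfix' : FixedFrom (↑(w * sN j)) n := by
    rw [mul_coe, sN_coe]; exact hfix.mul_swap hj
  rw [lenS_eq_card hfix', lenS_eq_card hfix, mul_coe, sN_coe,
    invF_mul_swap hfix hj ha]
  have hinj : Function.Injective
      (fun p : ℕ × ℕ => (Equiv.swap j (j+1) p.1, Equiv.swap j (j+1) p.2)) := by
    rintro ⟨a, b⟩ ⟨c, d⟩ h
    simp only [Prod.mk.injEq] at h
    exact Prod.ext ((Equiv.swap j (j+1)).injective h.1) ((Equiv.swap j (j+1)).injective h.2)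
  rw [Finset.card_insert_of_notMem, Finset.card_image_of_injective _ hinj]
  intro hmem
  simp only [Finset.mem_image, Prod.mk.injEq, Prod.exists] at hmem
  obtain ⟨p, q, hm, hp, hq⟩ := hmem
  have hp' : p = j + 1 := by
    have := congrArg (Equiv.swap j (j+1)) hp
    rwa [Equiv.swap_apply_self, Equiv.swap_apply_left] at this
  have hq' : q = j := by
    have := congrArg (Equiv.swap j (j+1)) hq
    rwa [Equiv.swap_apply_self, Equiv.swap_apply_right] at this
  rw [mem_invF] at hm
  omega

lemma lenS_lt_iff_descent (w : SPlus) (j : ℕ) :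
    lenS (w * sN j) < lenS w ↔ (w : Equiv.Perm ℕ) (j+1) < (w : Equiv.Perm ℕ) j := by
  obtain ⟨n₀, hfix₀⟩ := exists_fixedFrom w
  set n := max n₀ (j + 2) with hn
  have hfix : FixedFrom (↑w) n := fun m hm => hfix₀ m (by omega)
  have hj : j + 1 < n := by omega
  rcases lt_trichotomy ((w : Equiv.Perm ℕ) j) ((w : Equiv.Perm ℕ) (j+1)) with h | h | h
  · have := lenS_mul_sN_of_ascent hfix hj h
    constructor
    · intro hc; omega
    · intro hc; omega
  · exact absurd ((w : Equiv.Perm ℕ).injective h) (by omega)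
  · have hv : (↑(w * sN j) : Equiv.Perm ℕ) j < (↑(w * sN j) : Equiv.Perm ℕ) (j+1) := by
      rw [mul_coe, sN_coe]
      simp only [Equiv.Perm.mul_apply, Equiv.swap_apply_left, Equiv.swap_apply_right]
      exact h
    have hfix' : FixedFrom (↑(w * sN j)) n := by
      rw [mul_coe, sN_coe]; exact hfix.mul_swap hj
    have := lenS_mul_sN_of_ascent hfix' hj hv
    rw [mul_assoc, sN_mul_self, mul_one] at this
    constructor
    · intro _; exact h
    · intro _; omega

lemma lenS_lt_iff_ascent (w : SPlus) (j : ℕ) :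
    lenS w < lenS (w * sN j) ↔ (w : Equiv.Perm ℕ) j < (w : Equiv.Perm ℕ) (j+1) := by
  obtain ⟨n₀, hfix₀⟩ := exists_fixedFrom w
  set n := max n₀ (j + 2) with hn
  have hfix : FixedFrom (↑w) n := fun m hm => hfix₀ m (by omega)
  have hj : j + 1 < n := by omega
  rcases lt_trichotomy ((w : Equiv.Perm ℕ) j) ((w : Equiv.Perm ℕ) (j+1)) with h | h | h
  · have := lenS_mul_sN_of_ascent hfix hj h
    constructor <;> intro _
    · exact h
    · omega
  · exact absurd ((w : Equiv.Perm ℕ).injective h) (by omega)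
  · have hd := (lenS_lt_iff_descent w j).mpr h
    constructor <;> intro hc
    · omega
    · omega

lemma lenS_inv (w : SPlus) : lenS w⁻¹ = lenS w := by
  obtain ⟨n, hfix⟩ := exists_fixedFrom w
  have hfix' : FixedFrom (↑(w⁻¹)) n := by rw [inv_coe]; exact hfix.inv
  rw [lenS_eq_card hfix', lenS_eq_card hfix, inv_coe]
  have himg : invF n (↑w)⁻¹ = (invF n ↑w).image
      (fun p : ℕ × ℕ => ((w : Equiv.Perm ℕ) p.2, (w : Equiv.Perm ℕ) p.1)) := by
    ext ⟨a, b⟩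
    simp only [mem_invF, Finset.mem_image, Prod.mk.injEq, Prod.exists]
    constructor
    · rintro ⟨han, hbn, hab, hw⟩
      refine ⟨((w : Equiv.Perm ℕ))⁻¹ b, ((w : Equiv.Perm ℕ))⁻¹ a,
        ⟨hfix.inv.maps_lt hbn, hfix.inv.maps_lt han, hw, ?_⟩,
        by simp, by simp⟩
      simp only [Equiv.Perm.coe_inv, Equiv.apply_symm_apply]
      exact hab
    · rintro ⟨p, q, ⟨hpn, hqn, hpq, hw⟩, rfl, rfl⟩
      refine ⟨hfix.maps_lt hqn, hfix.maps_lt hpn, hw, ?_⟩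
      simp only [Equiv.Perm.coe_inv, Equiv.symm_apply_apply]
      exact hpq
  rw [himg, Finset.card_image_of_injective]
  rintro ⟨a, b⟩ ⟨c, d⟩ h
  simp only [Prod.mk.injEq] at h
  exact Prod.ext ((w : Equiv.Perm ℕ).injective h.2) ((w : Equiv.Perm ℕ).injective h.1)

lemma lenS_lt_iff_left_descent (w : SPlus) (i : ℕ) :
    lenS (sN i * w) < lenS w
      ↔ (w : Equiv.Perm ℕ)⁻¹ (i+1) < (w : Equiv.Perm ℕ)⁻¹ i := by
  have h1 : lenS (sN i * w) = lenS (w⁻¹ * sN i) := by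
    rw [← lenS_inv (sN i * w), mul_inv_rev, sN_inv]
  rw [h1, ← lenS_inv w, lenS_lt_iff_descent, inv_coe]

lemma lenS_lt_iff_left_ascent (w : SPlus) (i : ℕ) :
    lenS w < lenS (sN i * w)
      ↔ (w : Equiv.Perm ℕ)⁻¹ i < (w : Equiv.Perm ℕ)⁻¹ (i+1) := by
  have h1 : lenS (sN i * w) = lenS (w⁻¹ * sN i) := by
    rw [← lenS_inv (sN i * w), mul_inv_rev, sN_inv]
  rw [h1, ← lenS_inv w, lenS_lt_iff_ascent, inv_coe]

end SchubAux

namespace SchubAux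

lemma w0_coe (n m : ℕ) : ((w0 n : SPlus) : Equiv.Perm ℕ) m = w0fun n m := rfl

lemma w0_fixedFrom (n : ℕ) : FixedFrom (↑(w0 n)) n := by
  intro m hm
  show w0fun n m = m
  unfold w0fun
  rw [if_neg (by omega)]

lemma w0_inv (n : ℕ) : (w0 n)⁻¹ = w0 n := by
  rw [eq_comm, eq_inv_iff_mul_eq_one]
  apply Subtype.ext
  rw [mul_coe]
  apply Equiv.ext
  intro m
  simp only [Equiv.Perm.mul_apply, Equiv.Perm.one_apply]
  show ((w0 n : SPlus) : Equiv.Perm ℕ) (w0fun n m) = m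
  rw [w0_coe]
  exact w0fun_involutive n m

lemma eq_w0_of_no_ascent {w : SPlus} {n : ℕ} (hfix : FixedFrom (↑w) n)
    (h : ∀ j, j + 1 < n → (w : Equiv.Perm ℕ) (j+1) < (w : Equiv.Perm ℕ) j) :
    w = w0 n := by
  have hf : True := trivial
  have hchain : ∀ q, q < n → ∀ p, p < q → (w : Equiv.Perm ℕ) q < (w : Equiv.Perm ℕ) p := by
    intro q hq
    induction q with
    | zero => omega
    | succ q ih =>
      intro p hp
      have h1 : (w : Equiv.Perm ℕ) (q+1) < (w : Equiv.Perm ℕ) q := h q hq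
      rcases Nat.lt_succ_iff_lt_or_eq.mp hp with h2 | h2
      · exact lt_trans h1 (ih (by omega) p h2)
      · rw [h2]; exact h1
  have hub : ∀ p, p < n → (w : Equiv.Perm ℕ) p ≤ n - 1 - p := by
    intro p
    induction p with
    | zero =>
      intro h0
      have := hfix.maps_lt h0
      omega
    | succ p ih =>
      intro hp
      have h1 : (w : Equiv.Perm ℕ) (p+1) < (w : Equiv.Perm ℕ) p := h p hp
      have h2 := ih (by omega)
      omega
  have hlb : ∀ d p, p < n → n - 1 - p ≤ d → n - 1 - p ≤ (w : Equiv.Perm ℕ) p := by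
    intro d
    induction d with
    | zero =>
      intro p hp hd
      omega
    | succ d ih =>
      intro p hp hd
      by_cases hc : n - 1 - p ≤ d
      · exact ih p hp hc
      · have hpn : p + 1 < n := by omega
        have h1 : (w : Equiv.Perm ℕ) (p+1) < (w : Equiv.Perm ℕ) p := h p hpn
        have h2 : n - 1 - (p+1) ≤ (w : Equiv.Perm ℕ) (p+1) := ih (p+1) hpn (by omega)
        omega
  apply Subtype.ext
  apply Equiv.ext
  intro m
  show (w : Equiv.Perm ℕ) m = w0fun n m
  unfold w0fun
  by_cases hm : m < n
  · rw [if_pos hm]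
    have := hub m hm
    have := hlb (n - 1 - m) m hm le_rfl
    omega
  · rw [if_neg hm]
    exact hfix m (by omega)

lemma ascent_or_eq_w0 (w : SPlus) (n : ℕ) (hfix : FixedFrom (↑w) n) :
    (∃ j, j + 1 < n ∧ (w : Equiv.Perm ℕ) j < (w : Equiv.Perm ℕ) (j+1)) ∨ w = w0 n := by
  by_cases hc : ∃ j, j + 1 < n ∧ (w : Equiv.Perm ℕ) j < (w : Equiv.Perm ℕ) (j+1)
  · exact Or.inl hc
  · push_neg at hc
    refine Or.inr (eq_w0_of_no_ascent hfix fun j hj => ?_)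
    have h1 := hc j hj
    have h2 : (w : Equiv.Perm ℕ) j ≠ (w : Equiv.Perm ℕ) (j+1) := by
      intro he
      have := (w : Equiv.Perm ℕ).injective he
      omega
    omega

lemma sN_mul_w0 {n i : ℕ} (hi : i + 2 ≤ n) : sN i * w0 n = w0 n * sN (n - 2 - i) := by
  apply Subtype.ext
  rw [mul_coe, mul_coe, sN_coe, sN_coe]
  apply Equiv.ext
  intro m
  simp only [Equiv.Perm.mul_apply]
  rw [show ∀ x, ((w0 n : SPlus) : Equiv.Perm ℕ) x = w0fun n x from fun _ => rfl,
    show ∀ x, ((w0 n : SPlus) : Equiv.Perm ℕ) x = w0fun n x from fun _ => rfl]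
  unfold w0fun
  simp only [Equiv.swap_apply_def]
  split_ifs <;> omega

lemma mul_sN_eq_sN_mul {w : SPlus} {i j : ℕ}
    (h1 : (w : Equiv.Perm ℕ) j = i) (h2 : (w : Equiv.Perm ℕ) (j+1) = i + 1) :
    w * sN j = sN i * w := by
  apply Subtype.ext
  rw [mul_coe, mul_coe, sN_coe, sN_coe]
  apply Equiv.ext
  intro m
  simp only [Equiv.Perm.mul_apply]
  by_cases hm1 : m = j
  · rw [hm1, Equiv.swap_apply_left, h2, h1, Equiv.swap_apply_left]
  · by_cases hm2 : m = j + 1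
    · rw [hm2, Equiv.swap_apply_right, h1, h2, Equiv.swap_apply_right]
    · rw [Equiv.swap_apply_of_ne_of_ne hm1 hm2]
      have hne1 : (w : Equiv.Perm ℕ) m ≠ i := by
        intro he
        exact hm1 ((w : Equiv.Perm ℕ).injective (he.trans h1.symm))
      have hne2 : (w : Equiv.Perm ℕ) m ≠ i + 1 := by
        intro he
        exact hm2 ((w : Equiv.Perm ℕ).injective (he.trans h2.symm))
      rw [Equiv.swap_apply_of_ne_of_ne hne1 hne2]

end SchubAux

namespace SchubAux

open Finset

lemma swapInr_inl (i p : ℕ) :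
    Equiv.swap (Sum.inr i : ℕ ⊕ ℕ) (Sum.inr (i+1)) (Sum.inl p) = Sum.inl p :=
  Equiv.swap_apply_of_ne_of_ne (by simp) (by simp)

lemma swapInr_inr (i q : ℕ) :
    Equiv.swap (Sum.inr i : ℕ ⊕ ℕ) (Sum.inr (i+1)) (Sum.inr q)
      = Sum.inr (Equiv.swap i (i+1) q) :=
  Sum.inr_injective.swap_apply i (i+1) q

lemma swapInl_inr (j q : ℕ) :
    Equiv.swap (Sum.inl j : ℕ ⊕ ℕ) (Sum.inl (j+1)) (Sum.inr q) = Sum.inr q :=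
  Equiv.swap_apply_of_ne_of_ne (by simp) (by simp)

lemma swapInl_inl (j p : ℕ) :
    Equiv.swap (Sum.inl j : ℕ ⊕ ℕ) (Sum.inl (j+1)) (Sum.inl p)
      = Sum.inl (Equiv.swap j (j+1) p) :=
  Sum.inl_injective.swap_apply j (j+1) p

lemma sa_X_inl (i p : ℕ) : sa i (X (Sum.inl p) : DR) = X (Sum.inl p) := by
  simp only [sa, rename_X, swapInr_inl]

lemma sa_X_inr (i q : ℕ) : sa i (X (Sum.inr q) : DR) = X (Sum.inr (Equiv.swap i (i+1) q)) := by
  simp only [sa, rename_X, swapInr_inr]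

lemma sx_X_inr (j q : ℕ) : sx j (X (Sum.inr q) : DR) = X (Sum.inr q) := by
  simp only [sx, rename_X, swapInl_inr]

lemma sx_X_inl (j p : ℕ) : sx j (X (Sum.inl p) : DR) = X (Sum.inl (Equiv.swap j (j+1) p)) := by
  simp only [sx, rename_X, swapInl_inl]

lemma sx_sx (j : ℕ) (f : DR) : sx j (sx j f) = f := by
  simp only [sx]
  rw [rename_rename]
  have h : (fun v : ℕ ⊕ ℕ => Equiv.swap (Sum.inl j : ℕ ⊕ ℕ) (Sum.inl (j+1)) v)
      ∘ (fun v => Equiv.swap (Sum.inl j : ℕ ⊕ ℕ) (Sum.inl (j+1)) v) = id := by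
    funext v; exact Equiv.swap_apply_self _ _ v
  rw [h, rename_id, AlgHom.id_apply]

lemma sa_sa (i : ℕ) (f : DR) : sa i (sa i f) = f := by
  simp only [sa]
  rw [rename_rename]
  have h : (fun v : ℕ ⊕ ℕ => Equiv.swap (Sum.inr i : ℕ ⊕ ℕ) (Sum.inr (i+1)) v)
      ∘ (fun v => Equiv.swap (Sum.inr i : ℕ ⊕ ℕ) (Sum.inr (i+1)) v) = id := by
    funext v; exact Equiv.swap_apply_self _ _ v
  rw [h, rename_id, AlgHom.id_apply]

lemma sa_sx_comm (i j : ℕ) (f : DR) : sa i (sx j f) = sx j (sa i f) := by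
  simp only [sa, sx]
  rw [rename_rename, rename_rename]
  have hfun : ((fun v : ℕ ⊕ ℕ => Equiv.swap (Sum.inr i : ℕ ⊕ ℕ) (Sum.inr (i+1)) v)
        ∘ fun v => Equiv.swap (Sum.inl j : ℕ ⊕ ℕ) (Sum.inl (j+1)) v)
      = ((fun v : ℕ ⊕ ℕ => Equiv.swap (Sum.inl j : ℕ ⊕ ℕ) (Sum.inl (j+1)) v)
        ∘ fun v => Equiv.swap (Sum.inr i : ℕ ⊕ ℕ) (Sum.inr (i+1)) v) := by
    funext v
    cases v with
    | inl p => simp only [Function.comp_apply, swapInl_inl, swapInr_inl]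
    | inr q => simp only [Function.comp_apply, swapInl_inr, swapInr_inr]
  rw [hfun]

lemma cancelX {u v : ℕ ⊕ ℕ} (h : u ≠ v) {f g : DR}
    (hfg : (X u - X v) * f = (X u - X v) * g) : f = g := by
  have hne : (X u - X v : DR) ≠ 0 :=
    sub_ne_zero_of_ne (fun he => h (MvPolynomial.X_injective he))
  exact mul_left_cancel₀ hne hfg

/-- The statement to be proved, as a predicate. -/
def Stmt (D : SPlus → DR) (w : SPlus) (i : ℕ) : Prop :=
  if lenS (sN i * w) < lenS w then
    (X (Sum.inr i) - X (Sum.inr (i + 1))) * (- D (sN i * w)) = D w - sa i (D w)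
  else sa i (D w) = D w

lemma xsym (D : SPlus → DR) (hD : DoubleSchubertFamily' D) (w : SPlus) (j : ℕ)
    (h : lenS w < lenS (w * sN j)) : sx j (D w) = D w := by
  have R := hD.2 w j h
  have RA := congrArg (sx j) R
  rw [map_mul, map_sub, map_sub, sx_sx, sx_X_inl, sx_X_inl, Equiv.swap_apply_left,
    Equiv.swap_apply_right] at RA
  exact cancelX (u := Sum.inl (j+1)) (v := Sum.inl j) (by simp)
    (by linear_combination RA + R)

end SchubAux

namespace SchubAux

open Finset

/-- The factor `x_p - a_q`. -/
noncomputable def fac (p : ℕ × ℕ) : DR := X (Sum.inl p.1) - X (Sum.inr p.2)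

lemma base_case (D : SPlus → DR) (hD : DoubleSchubertFamily' D) (n i : ℕ) :
    Stmt D (w0 n) i := by
  have hw0inv : ((w0 n : SPlus) : Equiv.Perm ℕ)⁻¹ = ((w0 n : SPlus) : Equiv.Perm ℕ) := by
    rw [← inv_coe, w0_inv]
  by_cases hi : i + 2 ≤ n
  · -- descent case
    set j := n - 2 - i with hjdef
    have hj1 : j + 1 < n := by omega
    have hw0j : ((w0 n : SPlus) : Equiv.Perm ℕ) j = i + 1 := by
      rw [w0_coe]; unfold w0fun; rw [if_pos (by omega)]; omega
    have hw0j1 : ((w0 n : SPlus) : Equiv.Perm ℕ) (j+1) = i := by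
      rw [w0_coe]; unfold w0fun; rw [if_pos (by omega)]; omega
    have hw0i : ((w0 n : SPlus) : Equiv.Perm ℕ) i = n - 1 - i := by
      rw [w0_coe]; unfold w0fun; rw [if_pos (by omega)]
    have hw0i1 : ((w0 n : SPlus) : Equiv.Perm ℕ) (i+1) = n - 2 - i := by
      rw [w0_coe]; unfold w0fun; rw [if_pos (by omega)]; omega
    have hcond : lenS (sN i * w0 n) < lenS (w0 n) := by
      rw [lenS_lt_iff_left_descent, hw0inv, hw0i, hw0i1]
      omega
    -- the product decomposition
    set T : Finset (ℕ × ℕ) :=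
      (Finset.range n ×ˢ Finset.range n).filter (fun p => p.1 + p.2 + 2 ≤ n) with hT
    set C : DR := ∏ p ∈ T.erase (j, i), fac p with hC
    have hmem : (j, i) ∈ T := by
      rw [hT]
      simp only [Finset.mem_filter, Finset.mem_product, Finset.mem_range]
      omega
    have hF : D (w0 n) = fac (j, i) * C := by
      rw [hD.1 n, hC, Finset.mul_prod_erase T fac hmem, hT]
      rfl
    -- symmetry of C under sa i
    have hsaC : sa i C = C := by
      set τ : ℕ × ℕ → ℕ × ℕ := fun p => (p.1, Equiv.swap i (i+1) p.2) with hτ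
      have hτinj : Function.Injective τ := by
        rintro ⟨a, b⟩ ⟨c, d⟩ h
        simp only [hτ, Prod.mk.injEq] at h
        exact Prod.ext h.1 ((Equiv.swap i (i+1)).injective h.2)
      have hS : ∀ p ∈ T.erase (j, i), τ p ∈ T.erase (j, i) := by
        rintro ⟨p1, p2⟩ hp
        simp only [hT, Finset.mem_erase, Finset.mem_filter, Finset.mem_product,
          Finset.mem_range, ne_eq, Prod.mk.injEq] at hp
        have hne : ¬(p1 = j ∧ p2 = i) := hp.1
        obtain ⟨⟨h1, h2⟩, h3⟩ := hp.2
        simp only [hτ, hT, Finset.mem_erase, Finset.mem_filter, Finset.mem_product,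
          Finset.mem_range, ne_eq, Prod.mk.injEq]
        by_cases hc1 : p2 = i
        · subst hc1
          rw [Equiv.swap_apply_left]
          refine ⟨by omega, ⟨by omega, by omega⟩, by omega⟩
        · by_cases hc2 : p2 = i + 1
          · subst hc2
            rw [Equiv.swap_apply_right]
            refine ⟨by omega, ⟨by omega, by omega⟩, by omega⟩
          · rw [Equiv.swap_apply_of_ne_of_ne hc1 hc2]
            refine ⟨by omega, ⟨by omega, by omega⟩, by omega⟩
      have himg : (T.erase (j, i)).image τ = T.erase (j, i) := by
        apply Finset.eq_of_subset_of_card_le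
        · intro q hq
          obtain ⟨p, hp, rfl⟩ := Finset.mem_image.mp hq
          exact hS p hp
        · rw [Finset.card_image_of_injective _ hτinj]
      have hfacτ : ∀ p ∈ T.erase (j, i), sa i (fac p) = fac (τ p) := by
        rintro ⟨p1, p2⟩ _
        simp only [fac, hτ, map_sub, sa_X_inl, sa_X_inr]
      rw [hC, map_prod, Finset.prod_congr rfl hfacτ,
        ← Finset.prod_image (fun x hx y hy h => hτinj h), himg]
    -- symmetry of C under sx j
    have hsxC : sx j C = C := by
      set τ : ℕ × ℕ → ℕ × ℕ := fun p => (Equiv.swap j (j+1) p.1, p.2) with hτ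
      have hτinj : Function.Injective τ := by
        rintro ⟨a, b⟩ ⟨c, d⟩ h
        simp only [hτ, Prod.mk.injEq] at h
        exact Prod.ext ((Equiv.swap j (j+1)).injective h.1) h.2
      have hS : ∀ p ∈ T.erase (j, i), τ p ∈ T.erase (j, i) := by
        rintro ⟨p1, p2⟩ hp
        simp only [hT, Finset.mem_erase, Finset.mem_filter, Finset.mem_product,
          Finset.mem_range, ne_eq, Prod.mk.injEq] at hp
        have hne : ¬(p1 = j ∧ p2 = i) := hp.1
        obtain ⟨⟨h1, h2⟩, h3⟩ := hp.2
        simp only [hτ, hT, Finset.mem_erase, Finset.mem_filter, Finset.mem_product,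
          Finset.mem_range, ne_eq, Prod.mk.injEq]
        by_cases hc1 : p1 = j
        · subst hc1
          rw [Equiv.swap_apply_left]
          refine ⟨by omega, ⟨by omega, by omega⟩, by omega⟩
        · by_cases hc2 : p1 = j + 1
          · subst hc2
            rw [Equiv.swap_apply_right]
            refine ⟨by omega, ⟨by omega, by omega⟩, by omega⟩
          · rw [Equiv.swap_apply_of_ne_of_ne hc1 hc2]
            refine ⟨by omega, ⟨by omega, by omega⟩, by omega⟩
      have himg : (T.erase (j, i)).image τ = T.erase (j, i) := by
        apply Finset.eq_of_subset_of_card_le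
        · intro q hq
          obtain ⟨p, hp, rfl⟩ := Finset.mem_image.mp hq
          exact hS p hp
        · rw [Finset.card_image_of_injective _ hτinj]
      have hfacτ : ∀ p ∈ T.erase (j, i), sx j (fac p) = fac (τ p) := by
        rintro ⟨p1, p2⟩ _
        simp only [fac, hτ, map_sub, sx_X_inl, sx_X_inr]
      rw [hC, map_prod, Finset.prod_congr rfl hfacτ,
        ← Finset.prod_image (fun x hx y hy h => hτinj h), himg]
    have hsaF : sa i (D (w0 n)) = (X (Sum.inl j) - X (Sum.inr (i+1))) * C := by
      rw [hF, map_mul, hsaC]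
      simp only [fac, map_sub, sa_X_inl, sa_X_inr, Equiv.swap_apply_left]
    have hsxF : sx j (D (w0 n)) = (X (Sum.inl (j+1)) - X (Sum.inr i)) * C := by
      rw [hF, map_mul, hsxC]
      simp only [fac, map_sub, sx_X_inl, sx_X_inr, Equiv.swap_apply_left]
    -- the recursion at v = w0 n * sN j
    have hvasc : lenS (w0 n * sN j) < lenS ((w0 n * sN j) * sN j) := by
      rw [lenS_lt_iff_ascent, mul_coe, sN_coe]
      simp only [Equiv.Perm.mul_apply, Equiv.swap_apply_left, Equiv.swap_apply_right]
      rw [hw0j, hw0j1]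
      omega
    have R := hD.2 (w0 n * sN j) j hvasc
    rw [mul_assoc, sN_mul_self, mul_one] at R
    have hDv : D (w0 n * sN j) = C := by
      refine cancelX (u := Sum.inl j) (v := Sum.inl (j+1)) (by simp) ?_
      rw [R, hsxF, hF]
      simp only [fac]
      ring
    -- conclude
    rw [Stmt, if_pos hcond, sN_mul_w0 hi, ← hjdef, hDv, hsaF, hF]
    simp only [fac]
    ring
  · -- ascent case : i + 1 ≥ n
    have hcond : ¬ lenS (sN i * w0 n) < lenS (w0 n) := by
      rw [lenS_lt_iff_left_descent, hw0inv, w0_coe, w0_coe]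
      unfold w0fun
      split_ifs <;> omega
    rw [Stmt, if_neg hcond, hD.1 n, map_prod]
    apply Finset.prod_congr rfl
    rintro ⟨p1, p2⟩ hp
    simp only [Finset.mem_filter, Finset.mem_product, Finset.mem_range] at hp
    rw [map_sub, sa_X_inl, sa_X_inr,
      Equiv.swap_apply_of_ne_of_ne (by omega) (by omega)]

end SchubAux

namespace SchubAux

lemma main_induction (D : SPlus → DR) (hD : DoubleSchubertFamily' D) (n : ℕ) :
    ∀ k (w : SPlus), FixedFrom (↑w) n → n * n - lenS w ≤ k → ∀ i, Stmt D w i := by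
  intro k
  induction k with
  | zero =>
    intro w hfix hk i
    rcases ascent_or_eq_w0 w n hfix with ⟨j, hj, ha⟩ | rfl
    · exfalso
      have h1 := lenS_mul_sN_of_ascent hfix hj ha
      have hfixv : FixedFrom (↑(w * sN j)) n := by
        rw [mul_coe, sN_coe]; exact hfix.mul_swap hj
      have h2 := lenS_le hfixv
      omega
    · exact base_case D hD n i
  | succ k ih =>
    intro w hfix hk i
    rcases ascent_or_eq_w0 w n hfix with ⟨j, hj, ha⟩ | rfl
    swap
    · exact base_case D hD n i
    have hfixv : FixedFrom (↑(w * sN j)) n := by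
      rw [mul_coe, sN_coe]; exact hfix.mul_swap hj
    have hlen := lenS_mul_sN_of_ascent hfix hj ha
    have hkv : n * n - lenS (w * sN j) ≤ k := by
      have := lenS_le hfixv; omega
    have hasc : lenS w < lenS (w * sN j) := by omega
    have R := hD.2 w j hasc
    have IHv := ih (w * sN j) hfixv hkv i
    have hvinv : ∀ x, ((↑(w * sN j) : Equiv.Perm ℕ))⁻¹ x
        = Equiv.swap j (j+1) (((w : Equiv.Perm ℕ))⁻¹ x) := by
      intro x
      rw [mul_coe, sN_coe, mul_inv_rev, Equiv.Perm.mul_apply, Equiv.swap_inv]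
    have RA := congrArg (sa i) R
    rw [map_mul, map_sub, map_sub, sa_X_inl, sa_X_inl, sa_sx_comm] at RA
    rcases lt_trichotomy (((w : Equiv.Perm ℕ))⁻¹ i) (((w : Equiv.Perm ℕ))⁻¹ (i+1))
      with hpq | hpq | hpq
    · -- left ascent at i : goal sa i (D w) = D w
      have hcond : ¬ lenS (sN i * w) < lenS w := by
        rw [lenS_lt_iff_left_descent]; omega
      rw [Stmt, if_neg hcond]
      by_cases hc : (w : Equiv.Perm ℕ) j = i ∧ (w : Equiv.Perm ℕ) (j+1) = i + 1
      · -- the special case w sⱼ = sᵢ w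
        have hveq : w * sN j = sN i * w := mul_sN_eq_sN_mul hc.1 hc.2
        have e1 : ((w : Equiv.Perm ℕ))⁻¹ i = j := by
          rw [Equiv.Perm.inv_eq_iff_eq]; exact hc.1.symm
        have e2 : ((w : Equiv.Perm ℕ))⁻¹ (i+1) = j + 1 := by
          rw [Equiv.Perm.inv_eq_iff_eq]; exact hc.2.symm
        have hvdesc : lenS (sN i * (w * sN j)) < lenS (w * sN j) := by
          rw [lenS_lt_iff_left_descent, hvinv, hvinv, e1, e2,
            Equiv.swap_apply_left, Equiv.swap_apply_right]
          omega
        rw [Stmt, if_pos hvdesc] at IHv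
        have hsiv : sN i * (w * sN j) = w := by
          rw [hveq, ← mul_assoc, sN_mul_self, one_mul]
        rw [hsiv] at IHv
        have hsymw : sx j (D w) = D w := xsym D hD w j hasc
        have EvS := congrArg (sx j) IHv
        rw [map_mul, map_sub, map_sub, map_neg, sx_X_inr, sx_X_inr, hsymw] at EvS
        exact cancelX (u := Sum.inl j) (v := Sum.inl (j+1)) (by simp)
          (by linear_combination RA + IHv - EvS - R)
      · -- generic case
        have hne : ¬(((w : Equiv.Perm ℕ))⁻¹ i = j ∧ ((w : Equiv.Perm ℕ))⁻¹ (i+1) = j+1) := by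
          rintro ⟨e1, e2⟩
          refine hc ⟨?_, ?_⟩
          · rw [← e1, Equiv.Perm.inv_def, Equiv.apply_symm_apply]
          · rw [← e2, Equiv.Perm.inv_def, Equiv.apply_symm_apply]
        have hvasc : ¬ lenS (sN i * (w * sN j)) < lenS (w * sN j) := by
          rw [lenS_lt_iff_left_descent, hvinv, hvinv]
          have := swap_preserve hpq hne
          omega
        rw [Stmt, if_neg hvasc] at IHv
        rw [IHv] at RA
        exact cancelX (u := Sum.inl j) (v := Sum.inl (j+1)) (by simp)
          (by linear_combination RA - R)
    · exact absurd (((w : Equiv.Perm ℕ))⁻¹.injective hpq) (by omega)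
    · -- left descent at i
      have hcond : lenS (sN i * w) < lenS w := by
        rw [lenS_lt_iff_left_descent]; omega
      rw [Stmt, if_pos hcond]
      have hx1 : ¬(((w : Equiv.Perm ℕ))⁻¹ (i+1) = j ∧ ((w : Equiv.Perm ℕ))⁻¹ i = j+1) := by
        rintro ⟨e1, e2⟩
        have f1 : (w : Equiv.Perm ℕ) j = i + 1 := by
          rw [← e1, Equiv.Perm.inv_def, Equiv.apply_symm_apply]
        have f2 : (w : Equiv.Perm ℕ) (j+1) = i := by
          rw [← e2, Equiv.Perm.inv_def, Equiv.apply_symm_apply]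
        omega
      have hvdesc : lenS (sN i * (w * sN j)) < lenS (w * sN j) := by
        rw [lenS_lt_iff_left_descent, hvinv, hvinv]
        exact swap_preserve hpq hx1
      rw [Stmt, if_pos hvdesc] at IHv
      have hc2 : ¬((w : Equiv.Perm ℕ) j = i ∧ (w : Equiv.Perm ℕ) (j+1) = i + 1) := by
        rintro ⟨e1, e2⟩
        have f1 : ((w : Equiv.Perm ℕ))⁻¹ i = j := by
          rw [Equiv.Perm.inv_eq_iff_eq]; exact e1.symm
        have f2 : ((w : Equiv.Perm ℕ))⁻¹ (i+1) = j+1 := by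
          rw [Equiv.Perm.inv_eq_iff_eq]; exact e2.symm
        omega
      have hswasc : lenS (sN i * w) < lenS ((sN i * w) * sN j) := by
        rw [lenS_lt_iff_ascent, mul_coe, sN_coe]
        simp only [Equiv.Perm.mul_apply]
        exact swap_preserve ha hc2
      have R2 := hD.2 (sN i * w) j hswasc
      rw [mul_assoc] at R2
      have EvS := congrArg (sx j) IHv
      rw [map_mul, map_sub, map_sub, map_neg, sx_X_inr, sx_X_inr] at EvS
      exact cancelX (u := Sum.inl j) (v := Sum.inl (j+1)) (by simp)
        (by linear_combination (X (Sum.inr i) - X (Sum.inr (i+1))) * (- R2)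
              - R + RA + IHv - EvS)

end SchubAux
/-- Left divided differences on double Schubert polynomials:
`A_i^a 𝔖_w(x; a) = -𝔖_{sᵢ w}(x; a)` if `ℓ(sᵢ w) < ℓ(w)`, and `A_i^a 𝔖_w = 0`
otherwise; expressed via `(a_i - a_{i+1}) · (-𝔖_{sᵢ w}) = 𝔖_w - sᵢᵃ 𝔖_w`
resp. `sᵢᵃ 𝔖_w = 𝔖_w`. -/
theorem doubleSchubert_left_divided_difference
    (D : SPlus → DR) (hD : DoubleSchubertFamily' D) (w : SPlus) (i : ℕ) :
    if lenS (sN i * w) < lenS w then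
      (X (Sum.inr i) - X (Sum.inr (i + 1))) * (- D (sN i * w)) = D w - sa i (D w)
    else sa i (D w) = D w := by
  obtain ⟨n, hfix⟩ := SchubAux.exists_fixedFrom w
  have h := SchubAux.main_induction D hD n (n * n - lenS w) w hfix le_rfl i
  unfold SchubAux.Stmt at h
  exact h
end
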